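/- Let n ≥ 2 and let φ ∈ L^∞((0,∞)) be such that the limit φ(0^+) = lim_{t→0^+} φ(t) exists. Then lim_{ε→0^+} ∫_0^1 φ(t) ∫_{{y ∈ ℝ^n : |y| < ε}} ∂^2/∂y_1^2 ( e^{-|y|^2/(4t)} / (2√(π t))^n ) dy dt = -M · φ(0^+) · ∫_0^∞ e^{-1/(4s)} s^{-n/2 - 1} ds, where M = (2√π)^{-n} ∫_{{z̄ ∈ ℝ^{n-1} : |z̄| < 1}} √(1 - |z̄|^2) dz̄ > 0. -/

import Mathlib

open Real MeasureTheory Set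
open scoped ENNReal

/-- The Gauss–Weierstrass kernel `e^{-|y|²/(4t)}/(2√(πt))^n` on `ℝ^n`. -/
noncomputable def gaussKer (n : ℕ) (t : ℝ) (y : Fin n → ℝ) : ℝ :=
  Real.exp (-(∑ j, y j ^ 2) / (4 * t)) / (2 * Real.sqrt (π * t)) ^ n

/-- The second partial derivative `∂²/∂y₁²` of the Gauss–Weierstrass kernel. -/
noncomputable def d2GaussKer (n : ℕ) (hn : 0 < n) (t : ℝ) (y : Fin n → ℝ) : ℝ :=
  deriv (deriv (fun v : ℝ => gaussKer n t (Function.update y ⟨0, hn⟩ v))) (y ⟨0, hn⟩)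

/-- `α(ε) = ∫_0^1 φ(t) ∫_{|y|<ε} ∂²/∂y₁² (e^{-|y|²/(4t)}/(2√(πt))^n) dy dt`. -/
noncomputable def alphaFun (n : ℕ) (hn : 0 < n) (φ : ℝ → ℝ) (ε : ℝ) : ℝ :=
  ∫ t in Ioc (0 : ℝ) 1, φ t *
    ∫ y in {y : Fin n → ℝ | Real.sqrt (∑ j, y j ^ 2) < ε}, d2GaussKer n hn t y

/-- The constant `M = (2√π)^{-n} ∫_{|z̄|<1, z̄ ∈ ℝ^{n-1}} √(1-|z̄|²) dz̄`. -/
noncomputable def Mconst (n : ℕ) : ℝ :=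
  ((2 * Real.sqrt π) ^ n)⁻¹ *
    ∫ z in {z : Fin (n - 1) → ℝ | ∑ j, z j ^ 2 < 1}, Real.sqrt (1 - ∑ j, z j ^ 2)

lemma sum_update_sq {n : ℕ} (y : Fin n → ℝ) (i : Fin n) (v : ℝ) :
    ∑ j, (Function.update y i v j) ^ 2 = v ^ 2 + ∑ j ∈ Finset.univ.erase i, y j ^ 2 := by
  have : (fun j => (Function.update y i v j) ^ 2) = Function.update (fun j => y j ^ 2) i (v ^ 2) := by
    funext j
    exact Function.apply_update (fun k w => w ^ 2) y i v j
  rw [this, Finset.sum_update_of_mem (Finset.mem_univ i)]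
  simp [Finset.erase_eq]

lemma hasDerivAt_psi {t S C : ℝ} (v : ℝ) :
    HasDerivAt (fun v : ℝ => Real.exp (-(v ^ 2 + S) / (4 * t)) / C)
      (Real.exp (-(v ^ 2 + S) / (4 * t)) * (-(2 * v) / (4 * t)) / C) v := by
  have h1 : HasDerivAt (fun v : ℝ => -(v ^ 2 + S) / (4 * t)) (-(2 * v) / (4 * t)) v := by
    have : HasDerivAt (fun v : ℝ => v ^ 2 + S) (2 * v) v := by
      simpa using ((hasDerivAt_pow 2 v).add_const S)
    simpa [neg_div] using (this.neg.div_const (4 * t))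
  exact (h1.exp).div_const C

lemma hasDerivAt_psi' {t S C : ℝ} (v : ℝ) :
    HasDerivAt (fun v : ℝ => Real.exp (-(v ^ 2 + S) / (4 * t)) * (-(2 * v) / (4 * t)) / C)
      ((Real.exp (-(v ^ 2 + S) / (4 * t)) * (-(2 * v) / (4 * t)) * (-(2 * v) / (4 * t))
        + Real.exp (-(v ^ 2 + S) / (4 * t)) * (-2 / (4 * t))) / C) v := by
  have h1 : HasDerivAt (fun v : ℝ => -(v ^ 2 + S) / (4 * t)) (-(2 * v) / (4 * t)) v := by
    have : HasDerivAt (fun v : ℝ => v ^ 2 + S) (2 * v) v := by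
      simpa using ((hasDerivAt_pow 2 v).add_const S)
    simpa [neg_div] using (this.neg.div_const (4 * t))
  have h2 : HasDerivAt (fun v : ℝ => -(2 * v) / (4 * t)) (-2 / (4 * t)) v := by
    have : HasDerivAt (fun v : ℝ => 2 * v) 2 v := by
      simpa using (hasDerivAt_id v).const_mul 2
    simpa [neg_div] using (this.neg.div_const (4 * t))
  exact ((h1.exp.mul h2).div_const C).congr_deriv (by ring)

lemma d2GaussKer_eq {n : ℕ} (hn : 0 < n) {t : ℝ} (ht : 0 < t) (y : Fin n → ℝ) :
    d2GaussKer n hn t y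
      = ((y ⟨0, hn⟩) ^ 2 / (4 * t ^ 2) - 1 / (2 * t)) * gaussKer n t y := by
  set i : Fin n := ⟨0, hn⟩
  set S := ∑ j ∈ Finset.univ.erase i, y j ^ 2 with hS
  set C := (2 * Real.sqrt (π * t)) ^ n with hC
  have key : (fun v : ℝ => gaussKer n t (Function.update y i v))
      = fun v => Real.exp (-(v ^ 2 + S) / (4 * t)) / C := by
    funext v
    rw [gaussKer, sum_update_sq]
  have hd1 : deriv (fun v : ℝ => gaussKer n t (Function.update y i v))
      = fun v => Real.exp (-(v ^ 2 + S) / (4 * t)) * (-(2 * v) / (4 * t)) / C := by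
    rw [key]
    funext v
    exact (hasDerivAt_psi v).deriv
  have hsum : -(∑ j, y j ^ 2) / (4*t) = -((y i) ^ 2 + S) / (4 * t) := by
    rw [hS, ← Finset.add_sum_erase _ _ (Finset.mem_univ i)]
  have hC0 : C ≠ 0 := by
    rw [hC]
    positivity
  rw [d2GaussKer, hd1, (hasDerivAt_psi' (y i)).deriv, gaussKer, hsum, ← hC]
  clear_value C
  clear hC key hd1
  field_simp
  ring

lemma gaussKer_insertNth {m : ℕ} (t x : ℝ) (z : Fin m → ℝ) :
    gaussKer (m+1) t (Fin.insertNth 0 x z)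
      = Real.exp (-(x ^ 2 + ∑ j, z j ^ 2) / (4 * t)) / (2 * Real.sqrt (π * t)) ^ (m+1) := by
  have hs := Fin.sum_univ_succAbove (M := ℝ) (fun j => (Fin.insertNth (α := fun _ : Fin (m+1) => ℝ) 0 x z j) ^ 2) 0
  simp only [Fin.insertNth_apply_same, Fin.insertNth_apply_succAbove] at hs
  rw [gaussKer, hs]

lemma slice_integral {m : ℕ} (hn : 0 < m + 1) {t ε : ℝ} (ht : 0 < t) (hε : 0 < ε)
    (z : Fin m → ℝ) :
    (∫ x : ℝ, ({x : ℝ | x ^ 2 + ∑ j, z j ^ 2 < ε ^ 2}.indicator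
        (fun x => d2GaussKer (m+1) hn t (Fin.insertNth 0 x z)) x))
      = -(Real.exp (-ε ^ 2 / (4 * t)) / (t * (2 * Real.sqrt (π * t)) ^ (m+1)))
          * Real.sqrt (ε ^ 2 - ∑ j, z j ^ 2) := by
  set W := ∑ j, z j ^ 2 with hW
  set C := (2 * Real.sqrt (π * t)) ^ (m+1) with hC
  have hd2 : ∀ x : ℝ, d2GaussKer (m+1) hn t (Fin.insertNth 0 x z)
      = (x ^ 2 / (4 * t ^ 2) - 1 / (2 * t)) * (Real.exp (-(x ^ 2 + W) / (4 * t)) / C) := by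
    intro x
    have h0 : (⟨0, hn⟩ : Fin (m+1)) = 0 := rfl
    rw [d2GaussKer_eq hn ht, gaussKer_insertNth, h0, Fin.insertNth_apply_same]
  by_cases hWε : W < ε ^ 2
  · have ha : 0 < Real.sqrt (ε ^ 2 - W) := Real.sqrt_pos.2 (by linarith)
    set a := Real.sqrt (ε ^ 2 - W) with haa
    have ha2 : a ^ 2 = ε ^ 2 - W := Real.sq_sqrt (by linarith)
    have hset : {x : ℝ | x ^ 2 + W < ε ^ 2} = Ioo (-a) a := by
      ext x
      simp only [mem_setOf_eq, mem_Ioo]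
      constructor
      · intro h
        constructor <;> nlinarith [sq_nonneg (x - a), sq_nonneg (x + a)]
      · rintro ⟨h1, h2⟩
        nlinarith
    rw [hset, integral_indicator measurableSet_Ioo]
    have hIoo : ∫ x in Ioo (-a) a, (fun x => d2GaussKer (m+1) hn t (Fin.insertNth 0 x z)) x
        = ∫ x in (-a)..a, d2GaussKer (m+1) hn t (Fin.insertNth 0 x z) := by
      rw [intervalIntegral.integral_of_le (by linarith : -a ≤ a),
        MeasureTheory.integral_Ioc_eq_integral_Ioo]
    rw [hIoo]
    have hF : ∀ x ∈ uIcc (-a) a, HasDerivAt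
        (fun x : ℝ => Real.exp (-(x ^ 2 + W) / (4 * t)) * (-(2 * x) / (4 * t)) / C)
        (d2GaussKer (m+1) hn t (Fin.insertNth 0 x z)) x := by
      intro x _
      have h1 : HasDerivAt (fun v : ℝ => -(v ^ 2 + W) / (4 * t)) (-(2 * x) / (4 * t)) x := by
        have : HasDerivAt (fun v : ℝ => v ^ 2 + W) (2 * x) x := by
          simpa using ((hasDerivAt_pow 2 x).add_const W)
        simpa [neg_div] using (this.neg.div_const (4 * t))
      have h2 : HasDerivAt (fun v : ℝ => -(2 * v) / (4 * t)) (-2 / (4 * t)) x := by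
        have : HasDerivAt (fun v : ℝ => 2 * v) 2 x := by
          simpa using (hasDerivAt_id x).const_mul 2
        simpa [neg_div] using (this.neg.div_const (4 * t))
      refine ((h1.exp.mul h2).div_const C).congr_deriv ?_
      rw [hd2 x]
      field_simp
      ring
    have hcont : Continuous (fun x : ℝ => d2GaussKer (m+1) hn t (Fin.insertNth 0 x z)) := by
      have : (fun x : ℝ => d2GaussKer (m+1) hn t (Fin.insertNth 0 x z))
          = fun x => (x ^ 2 / (4 * t ^ 2) - 1 / (2 * t)) * (Real.exp (-(x ^ 2 + W) / (4 * t)) / C) := by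
        funext x; exact hd2 x
      rw [this]
      fun_prop
    rw [intervalIntegral.integral_eq_sub_of_hasDerivAt hF (hcont.intervalIntegrable _ _)]
    have hexp : -(a ^ 2 + W) / (4 * t) = -ε ^ 2 / (4 * t) := by rw [ha2]; ring_nf
    have hexp' : -((-a) ^ 2 + W) / (4 * t) = -ε ^ 2 / (4 * t) := by
      rw [neg_pow, ha2]; ring_nf
    rw [hexp, hexp']
    have hC0 : C ≠ 0 := by rw [hC]; positivity
    field_simp
    ring
  · have hset : {x : ℝ | x ^ 2 + W < ε ^ 2} = (∅ : Set ℝ) := by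
      ext x
      simp only [mem_setOf_eq, mem_empty_iff_false, iff_false, not_lt]
      nlinarith [sq_nonneg x]
    have hz : Real.sqrt (ε ^ 2 - W) = 0 := Real.sqrt_eq_zero_of_nonpos (by linarith [not_lt.1 hWε])
    rw [hset, hz]
    simp

lemma scaling_integral {m : ℕ} {ε : ℝ} (hε : 0 < ε) :
    (∫ z : Fin m → ℝ, Real.sqrt (ε ^ 2 - ∑ j, z j ^ 2))
      = ε ^ (m+1) * ∫ z in {z : Fin m → ℝ | ∑ j, z j ^ 2 < 1}, Real.sqrt (1 - ∑ j, z j ^ 2) := by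
  have hmeas : MeasurableSet {z : Fin m → ℝ | ∑ j, z j ^ 2 < 1} := by
    have hcont : Continuous (fun z : Fin m → ℝ => ∑ j, z j ^ 2) := by fun_prop
    exact (isOpen_lt hcont continuous_const).measurableSet
  have hind : {z : Fin m → ℝ | ∑ j, z j ^ 2 < 1}.indicator
      (fun z => Real.sqrt (1 - ∑ j, z j ^ 2)) = fun z => Real.sqrt (1 - ∑ j, z j ^ 2) := by
    funext z
    by_cases h : ∑ j, z j ^ 2 < 1
    · simp [Set.indicator_apply, h]
    · simp [Set.indicator_apply, h, Real.sqrt_eq_zero_of_nonpos (by linarith [not_lt.1 h] : 1 - ∑ j, z j ^ 2 ≤ 0)]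
  rw [← integral_indicator hmeas, hind]
  have hcs := MeasureTheory.Measure.integral_comp_smul (volume : Measure (Fin m → ℝ))
    (fun w : Fin m → ℝ => Real.sqrt (ε ^ 2 - ∑ j, w j ^ 2)) ε
  have hlhs : (fun z : Fin m → ℝ => Real.sqrt (ε ^ 2 - ∑ j, (ε • z) j ^ 2))
      = fun z : Fin m → ℝ => ε * Real.sqrt (1 - ∑ j, z j ^ 2) := by
    funext z
    have : ε ^ 2 - ∑ j, (ε • z) j ^ 2 = ε ^ 2 * (1 - ∑ j, z j ^ 2) := by
      simp only [Pi.smul_apply, smul_eq_mul, mul_pow, ← Finset.mul_sum]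
      ring
    rw [this, Real.sqrt_mul (sq_nonneg ε), Real.sqrt_sq hε.le]
  rw [hlhs] at hcs
  rw [MeasureTheory.integral_const_mul] at hcs
  have hfr : Module.finrank ℝ (Fin m → ℝ) = m := Module.finrank_fin_fun ℝ
  rw [hfr, abs_of_nonneg (by positivity : (0:ℝ) ≤ ((ε ^ m)⁻¹)), smul_eq_mul] at hcs
  have hεm : (ε ^ m) ≠ 0 := by positivity
  have := hcs
  field_simp at this
  rw [← this, pow_succ]
  ring

lemma continuous_d2GaussKer {n : ℕ} (hn : 0 < n) {t : ℝ} (ht : 0 < t) :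
    Continuous (fun y : Fin n → ℝ => d2GaussKer n hn t y) := by
  have : (fun y : Fin n → ℝ => d2GaussKer n hn t y)
      = fun y => ((y ⟨0, hn⟩) ^ 2 / (4 * t ^ 2) - 1 / (2 * t)) * gaussKer n t y := by
    funext y; exact d2GaussKer_eq hn ht y
  rw [this]
  unfold gaussKer
  fun_prop

lemma inner_integral {m : ℕ} (hn : 0 < m + 1) {t ε : ℝ} (ht : 0 < t) (hε : 0 < ε) :
    (∫ y in {y : Fin (m+1) → ℝ | Real.sqrt (∑ j, y j ^ 2) < ε}, d2GaussKer (m+1) hn t y)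
      = -(Real.exp (-ε ^ 2 / (4 * t)) / (t * (2 * Real.sqrt (π * t)) ^ (m+1))) * ε ^ (m+1)
          * ∫ z in {z : Fin m → ℝ | ∑ j, z j ^ 2 < 1}, Real.sqrt (1 - ∑ j, z j ^ 2) := by
  have hsetEq : {y : Fin (m+1) → ℝ | Real.sqrt (∑ j, y j ^ 2) < ε}
      = {y : Fin (m+1) → ℝ | ∑ j, y j ^ 2 < ε ^ 2} := by
    ext y; simp [Real.sqrt_lt' hε]
  have hcontSum : Continuous (fun y : Fin (m+1) → ℝ => ∑ j, y j ^ 2) := by fun_prop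
  have hmeas : MeasurableSet {y : Fin (m+1) → ℝ | ∑ j, y j ^ 2 < ε ^ 2} :=
    (isOpen_lt hcontSum continuous_const).measurableSet
  rw [hsetEq, ← integral_indicator hmeas]
  set S := {y : Fin (m+1) → ℝ | ∑ j, y j ^ 2 < ε ^ 2} with hS
  set G := S.indicator (fun y => d2GaussKer (m+1) hn t y) with hG
  -- integrability of G
  have hGint : Integrable G volume := by
    rw [hG, integrable_indicator_iff hmeas]
    have hK : IsCompact {y : Fin (m+1) → ℝ | ∑ j, y j ^ 2 ≤ ε ^ 2} := by
      refine (isCompact_closedBall (0 : Fin (m+1) → ℝ) ε).of_isClosed_subset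
        (isClosed_le hcontSum continuous_const) ?_
      intro y hy
      simp only [mem_setOf_eq] at hy
      rw [Metric.mem_closedBall, dist_zero_right]
      rw [pi_norm_le_iff_of_nonneg hε.le]
      intro i
      have h0 : y i ^ 2 ≤ ∑ j, y j ^ 2 := by
        simpa using Finset.single_le_sum (f := fun j => (y j) ^ 2)
          (fun j _ => sq_nonneg (y j)) (Finset.mem_univ i)
      have h1 : (y i) ^ 2 ≤ ε ^ 2 := le_trans h0 hy
      have := Real.sqrt_le_sqrt h1
      rwa [Real.sqrt_sq_eq_abs, Real.sqrt_sq hε.le] at this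
    exact ((continuous_d2GaussKer hn ht).continuousOn.integrableOn_compact hK).mono_set
      (by intro y hy; simp only [mem_setOf_eq] at hy ⊢; exact hy.le)
  -- move to the product space
  have hmp := MeasureTheory.volume_preserving_piFinSuccAbove (fun _ : Fin (m+1) => ℝ) 0
  have hint : ∫ y : Fin (m+1) → ℝ, G y
      = ∫ p : ℝ × (Fin m → ℝ), G ((MeasurableEquiv.piFinSuccAbove (fun _ : Fin (m+1) => ℝ) 0).symm p) := by
    rw [(hmp.symm _).integral_comp (MeasurableEquiv.piFinSuccAbove (fun _ : Fin (m+1) => ℝ) 0).symm.measurableEmbedding G]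
  rw [hint]
  have hGsymm : ∀ p : ℝ × (Fin m → ℝ),
      G ((MeasurableEquiv.piFinSuccAbove (fun _ : Fin (m+1) => ℝ) 0).symm p)
        = {x : ℝ | x ^ 2 + ∑ j, p.2 j ^ 2 < ε ^ 2}.indicator
            (fun x => d2GaussKer (m+1) hn t (Fin.insertNth 0 x p.2)) p.1 := by
    rintro ⟨x, z⟩
    have hesymm : (MeasurableEquiv.piFinSuccAbove (fun _ : Fin (m+1) => ℝ) 0).symm (x, z)
        = Fin.insertNth 0 x z := by
      rw [MeasurableEquiv.piFinSuccAbove_symm_apply]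
      rfl
    dsimp only
    rw [hesymm]
    have hsum : ∑ j, (Fin.insertNth (α := fun _ : Fin (m+1) => ℝ) 0 x z) j ^ 2
        = x ^ 2 + ∑ j, z j ^ 2 := by
      have hs := Fin.sum_univ_succAbove (M := ℝ)
        (fun j => (Fin.insertNth (α := fun _ : Fin (m+1) => ℝ) 0 x z j) ^ 2) 0
      simpa using hs
    have hmem : (Fin.insertNth 0 x z ∈ S) ↔ x ^ 2 + ∑ j, z j ^ 2 < ε ^ 2 := by
      rw [hS]
      simp only [mem_setOf_eq, hsum]
    by_cases h : x ^ 2 + ∑ j, z j ^ 2 < ε ^ 2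
    · rw [hG, Set.indicator_of_mem (hmem.2 h),
        Set.indicator_of_mem (show x ∈ {x : ℝ | x ^ 2 + ∑ j, z j ^ 2 < ε ^ 2} from h)]
    · rw [hG, Set.indicator_of_notMem (fun hc => h (hmem.1 hc)),
        Set.indicator_of_notMem (show x ∉ {x : ℝ | x ^ 2 + ∑ j, z j ^ 2 < ε ^ 2} from h)]
  calc ∫ p : ℝ × (Fin m → ℝ), G ((MeasurableEquiv.piFinSuccAbove (fun _ : Fin (m+1) => ℝ) 0).symm p)
      = ∫ z : Fin m → ℝ, ∫ x : ℝ,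
          G ((MeasurableEquiv.piFinSuccAbove (fun _ : Fin (m+1) => ℝ) 0).symm (x, z)) := by
        rw [show (volume : Measure (ℝ × (Fin m → ℝ))) = (volume : Measure ℝ).prod volume from
          Measure.volume_eq_prod ℝ (Fin m → ℝ)] at *
        refine MeasureTheory.integral_prod_symm _ ?_
        exact ((hmp.symm _).integrable_comp_emb
          (MeasurableEquiv.piFinSuccAbove (fun _ : Fin (m+1) => ℝ) 0).symm.measurableEmbedding).2 hGint
    _ = ∫ z : Fin m → ℝ,
          -(Real.exp (-ε ^ 2 / (4 * t)) / (t * (2 * Real.sqrt (π * t)) ^ (m+1)))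
            * Real.sqrt (ε ^ 2 - ∑ j, z j ^ 2) := by
        congr 1
        funext z
        rw [show (fun x : ℝ =>
            G ((MeasurableEquiv.piFinSuccAbove (fun _ : Fin (m+1) => ℝ) 0).symm (x, z)))
          = fun x : ℝ => {x : ℝ | x ^ 2 + ∑ j, z j ^ 2 < ε ^ 2}.indicator
              (fun x => d2GaussKer (m+1) hn t (Fin.insertNth 0 x z)) x from
          funext fun x => hGsymm (x, z)]
        exact slice_integral hn ht hε z
    _ = -(Real.exp (-ε ^ 2 / (4 * t)) / (t * (2 * Real.sqrt (π * t)) ^ (m+1))) * ε ^ (m+1)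
          * ∫ z in {z : Fin m → ℝ | ∑ j, z j ^ 2 < 1}, Real.sqrt (1 - ∑ j, z j ^ 2) := by
        rw [MeasureTheory.integral_const_mul, scaling_integral hε]
        ring

lemma Jpos (k : ℕ) :
    0 < ∫ z in {z : Fin k → ℝ | ∑ j, z j ^ 2 < 1}, Real.sqrt (1 - ∑ j, z j ^ 2) := by
  set f : (Fin k → ℝ) → ℝ := fun z => Real.sqrt (1 - ∑ j, z j ^ 2) with hf
  have hcontSum : Continuous (fun z : Fin k → ℝ => ∑ j, z j ^ 2) := by fun_prop
  have hfc : Continuous f := by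
    rw [hf]; fun_prop
  set A := {z : Fin k → ℝ | ∑ j, z j ^ 2 < 1} with hA
  have hmeasA : MeasurableSet A := (isOpen_lt hcontSum continuous_const).measurableSet
  have hK : IsCompact {z : Fin k → ℝ | ∑ j, z j ^ 2 ≤ 1} := by
    refine (isCompact_closedBall (0 : Fin k → ℝ) 1).of_isClosed_subset
      (isClosed_le hcontSum continuous_const) ?_
    intro z hz
    simp only [mem_setOf_eq] at hz
    rw [Metric.mem_closedBall, dist_zero_right, pi_norm_le_iff_of_nonneg zero_le_one]
    intro i
    have h0 : z i ^ 2 ≤ ∑ j, z j ^ 2 := by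
      simpa using Finset.single_le_sum (f := fun j => (z j) ^ 2)
        (fun j _ => sq_nonneg (z j)) (Finset.mem_univ i)
    have h1 : z i ^ 2 ≤ 1 := le_trans h0 hz
    have := Real.sqrt_le_sqrt h1
    rwa [Real.sqrt_sq_eq_abs, Real.sqrt_one] at this
  have hfiA : IntegrableOn f A := by
    exact (hfc.continuousOn.integrableOn_compact hK).mono_set
      (by intro z hz; simp only [mem_setOf_eq] at hz ⊢; exact hz.le)
  set r : ℝ := 1 / (k + 1) with hr
  have hrpos : 0 < r := by positivity
  set B := Metric.ball (0 : Fin k → ℝ) r with hB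
  have hBsub : B ⊆ A := by
    intro z hz
    rw [hB, Metric.mem_ball, dist_zero_right] at hz
    have hsum : ∑ j, z j ^ 2 ≤ k * r ^ 2 := by
      have : ∀ j, z j ^ 2 ≤ r ^ 2 := by
        intro j
        have h1 : |z j| ≤ ‖z‖ := by
          simpa using norm_le_pi_norm z j
        have h2 : |z j| ≤ r := le_trans h1 hz.le
        nlinarith [abs_nonneg (z j), sq_abs (z j)]
      calc ∑ j, z j ^ 2 ≤ ∑ _j : Fin k, r ^ 2 := Finset.sum_le_sum (fun j _ => this j)
        _ = k * r ^ 2 := by simp [mul_comm]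
    have hkr : (k : ℝ) * r ^ 2 ≤ 1 / 4 := by
      rw [hr, div_pow, one_pow, mul_one_div, div_le_div_iff₀ (by positivity) (by norm_num)]
      nlinarith [sq_nonneg ((k:ℝ) - 1)]
    simp only [hA, mem_setOf_eq]
    linarith
  have hhalf : ∀ z ∈ B, (1:ℝ)/2 ≤ f z := by
    intro z hz
    have h1 : ∑ j, z j ^ 2 < 1 := hBsub hz
    have h2 : ∑ j, z j ^ 2 ≤ 1/4 := by
      -- reuse the bound from hBsub proof; redo quickly
      rw [hB, Metric.mem_ball, dist_zero_right] at hz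
      have hsum : ∑ j, z j ^ 2 ≤ k * r ^ 2 := by
        have : ∀ j, z j ^ 2 ≤ r ^ 2 := by
          intro j
          have ha : |z j| ≤ ‖z‖ := by simpa using norm_le_pi_norm z j
          have hb : |z j| ≤ r := le_trans ha hz.le
          nlinarith [abs_nonneg (z j), sq_abs (z j)]
        calc ∑ j, z j ^ 2 ≤ ∑ _j : Fin k, r ^ 2 := Finset.sum_le_sum (fun j _ => this j)
          _ = k * r ^ 2 := by simp [mul_comm]
      have hkr : (k : ℝ) * r ^ 2 ≤ 1 / 4 := by
        rw [hr, div_pow, one_pow, mul_one_div, div_le_div_iff₀ (by positivity) (by norm_num)]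
        nlinarith [sq_nonneg ((k:ℝ) - 1)]
      linarith
    have h3 : (3:ℝ)/4 ≤ 1 - ∑ j, z j ^ 2 := by linarith
    have h4 : Real.sqrt (3/4) ≤ f z := by
      rw [hf]
      exact Real.sqrt_le_sqrt h3
    have h5 : (1:ℝ)/2 ≤ Real.sqrt (3/4) := by
      nlinarith [Real.sq_sqrt (show (0:ℝ) ≤ 3/4 by norm_num),
        Real.sqrt_nonneg (3/4 : ℝ)]
    linarith
  have hBmeas : MeasurableSet B := Metric.isOpen_ball.measurableSet
  have hBfin : volume B ≠ ⊤ := (measure_ball_lt_top).ne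
  have hBpos : 0 < volume B := Metric.measure_ball_pos volume 0 hrpos
  have hfiB : IntegrableOn f B := hfiA.mono_set hBsub
  have hge := MeasureTheory.setIntegral_ge_of_const_le hBmeas hBfin hhalf hfiB
  have hmono : ∫ z in B, f z ≤ ∫ z in A, f z := by
    refine MeasureTheory.setIntegral_mono_set hfiA ?_ (HasSubset.Subset.eventuallyLE hBsub)
    exact Filter.Eventually.of_forall (fun z => Real.sqrt_nonneg _)
  have hvol : 0 < (volume B).toReal := ENNReal.toReal_pos hBpos.ne' hBfin
  calc (0:ℝ) < 1/2 * (volume B).toReal := by positivity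
    _ ≤ ∫ z in B, f z := by rw [smul_eq_mul, mul_comm] at hge; exact hge
    _ ≤ ∫ z in A, f z := hmono

lemma Mconst_pos {n : ℕ} : 0 < Mconst n := by
  have h1 : (0:ℝ) < ((2 * Real.sqrt π) ^ n)⁻¹ := by
    have : (0:ℝ) < Real.sqrt π := Real.sqrt_pos.2 pi_pos
    positivity
  exact mul_pos h1 (Jpos (n - 1))


lemma expfac_cont {p : ℝ} : ContinuousOn (fun s : ℝ => Real.exp (-1/(4*s)) * s ^ p) (Ioi (0:ℝ)) := by
  apply ContinuousOn.mul
  · apply Real.continuous_exp.comp_continuousOn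
    apply ContinuousOn.div continuousOn_const
      (continuous_const.mul continuous_id).continuousOn
    intro s hs
    have h0 : (0:ℝ) < s := hs
    show (4:ℝ) * s ≠ 0
    positivity
  · exact ContinuousOn.rpow_const continuousOn_id (fun s hs => Or.inl (ne_of_gt hs))

lemma expfac_nonneg {p : ℝ} {s : ℝ} (hs : 0 < s) : 0 ≤ Real.exp (-1/(4*s)) * s ^ p :=
  mul_nonneg (Real.exp_nonneg _) (Real.rpow_nonneg hs.le p)

lemma exp_rpow_integrable {p : ℝ} (hp : p < -1) :
    IntegrableOn (fun s : ℝ => Real.exp (-1/(4*s)) * s ^ p) (Ioi (0:ℝ)) := by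
  have h1 : IntegrableOn (fun s : ℝ => Real.exp (-1/(4*s)) * s ^ p) (Ioi (1:ℝ)) := by
    refine Integrable.mono (integrableOn_Ioi_rpow_of_lt hp one_pos)
      ((expfac_cont.mono (fun s (hs : (1:ℝ) < s) => lt_trans one_pos hs)).aestronglyMeasurable
        measurableSet_Ioi) ?_
    rw [MeasureTheory.ae_restrict_iff' measurableSet_Ioi]
    refine Filter.Eventually.of_forall (fun s hs => ?_)
    have hs0 : (0:ℝ) < s := lt_trans one_pos hs
    have hrp : (0:ℝ) < s ^ p := Real.rpow_pos_of_pos hs0 p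
    have he : Real.exp (-1/(4*s)) ≤ 1 := Real.exp_le_one_iff.2 (by
      have : (0:ℝ) < 4*s := by positivity
      rw [neg_div]
      simp only [neg_nonpos]
      positivity)
    rw [Real.norm_eq_abs, Real.norm_eq_abs, abs_of_nonneg (expfac_nonneg hs0),
      abs_of_nonneg hrp.le]
    · nlinarith [Real.exp_nonneg (-1/(4*s))]
  have h2 : IntegrableOn (fun s : ℝ => Real.exp (-1/(4*s)) * s ^ p) (Ioc (0:ℝ) 1) := by
    set k : ℕ := ⌈-p⌉₊ with hk
    have hkp : 0 ≤ (k:ℝ) + p := by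
      have := Nat.le_ceil (-p)
      linarith
    set c : ℝ := (k.factorial : ℝ) * 4 ^ k with hc
    have hbound : ∀ s ∈ Ioc (0:ℝ) 1, ‖Real.exp (-1/(4*s)) * s ^ p‖ ≤ c := by
      intro s hs
      obtain ⟨hs0, hs1⟩ := hs
      have hx : (0:ℝ) < 1/(4*s) := by positivity
      have hfac : (0:ℝ) < (k.factorial : ℝ) := by positivity
      have h1' : (1/(4*s)) ^ k / (k.factorial : ℝ) ≤ Real.exp (1/(4*s)) :=
        Real.pow_div_factorial_le_exp _ hx.le k
      have hek : Real.exp (-1/(4*s)) ≤ (k.factorial : ℝ) * (4*s) ^ k := by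
        rw [show (-1/(4*s) : ℝ) = -(1/(4*s)) by ring, Real.exp_neg]
        rw [inv_le_comm₀ (Real.exp_pos _) (by positivity)]
        calc ((k.factorial : ℝ) * (4*s) ^ k)⁻¹ = (1/(4*s)) ^ k / (k.factorial : ℝ) := by
              rw [div_pow, one_pow]
              field_simp
            _ ≤ Real.exp (1/(4*s)) := h1'
      have hsk : s ^ (k:ℕ) * s ^ p = s ^ ((k:ℝ) + p) := by
        rw [← Real.rpow_natCast s k, ← Real.rpow_add hs0]
      have hsle : s ^ ((k:ℝ) + p) ≤ 1 := Real.rpow_le_one hs0.le hs1 hkp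
      have hrp : (0:ℝ) ≤ s ^ p := Real.rpow_nonneg hs0.le p
      rw [Real.norm_eq_abs, abs_of_nonneg (expfac_nonneg hs0)]
      calc Real.exp (-1/(4*s)) * s ^ p ≤ ((k.factorial : ℝ) * (4*s) ^ k) * s ^ p := by
            exact mul_le_mul_of_nonneg_right hek hrp
        _ = c * (s ^ (k:ℕ) * s ^ p) := by rw [hc, mul_pow]; ring
        _ = c * s ^ ((k:ℝ) + p) := by rw [hsk]
        _ ≤ c * 1 := by
            apply mul_le_mul_of_nonneg_left hsle
            rw [hc]; positivity
        _ = c := mul_one c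
    have hgc : IntegrableOn (fun _ : ℝ => c) (Ioc (0:ℝ) 1) :=
      integrableOn_const measure_Ioc_lt_top.ne
    refine Integrable.mono hgc
      ((expfac_cont.mono Ioc_subset_Ioi_self).aestronglyMeasurable measurableSet_Ioc) ?_
    rw [MeasureTheory.ae_restrict_iff' measurableSet_Ioc]
    refine Filter.Eventually.of_forall (fun s hs => ?_)
    calc ‖Real.exp (-1/(4*s)) * s ^ p‖ ≤ c := hbound s hs
      _ ≤ ‖c‖ := le_abs_self c
  have := h2.union h1
  rwa [Ioc_union_Ioi_eq_Ioi zero_le_one] at this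

lemma G_tendsto {p : ℝ} (hp : p < -1) (φ : ℝ → ℝ)
    (hφ : MemLp φ ⊤ (volume.restrict (Ioi (0:ℝ))))
    (L : ℝ) (hφL : Filter.Tendsto φ (nhdsWithin 0 (Ioi 0)) (nhds L)) :
    Filter.Tendsto (fun ε : ℝ => ∫ s in Ioi (0:ℝ),
        (Ioc (0:ℝ) (ε^2)⁻¹).indicator
          (fun s => φ (ε^2*s) * (Real.exp (-1/(4*s)) * s ^ p)) s)
      (nhdsWithin 0 (Ioi 0))
      (nhds (L * ∫ s in Ioi (0:ℝ), Real.exp (-1/(4*s)) * s ^ p)) := by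
  set μ := volume.restrict (Ioi (0:ℝ)) with hμ
  set A : ℝ → ℝ := fun s => Real.exp (-1/(4*s)) * s ^ p with hA
  set F : ℝ → ℝ → ℝ := fun ε s => (Ioc (0:ℝ) (ε^2)⁻¹).indicator
    (fun s => φ (ε^2*s) * A s) s with hF
  -- essential sup bound
  set C0 : ℝ := (eLpNorm φ ⊤ μ).toReal with hC0
  have hC0nn : 0 ≤ C0 := ENNReal.toReal_nonneg
  have hfin : eLpNorm φ ⊤ μ < ⊤ := hφ.2
  have hae : ∀ᵐ t ∂μ, ‖φ t‖ ≤ C0 := by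
    filter_upwards [MeasureTheory.ae_le_eLpNormEssSup (f := φ) (μ := μ)] with t ht
    have h2 : (‖φ t‖₊ : ℝ≥0∞) ≤ eLpNorm φ ⊤ μ := by
      rwa [MeasureTheory.eLpNorm_exponent_top]
    have := ENNReal.toReal_mono hfin.ne h2
    simpa [hC0, MeasureTheory.eLpNorm_exponent_top] using this
  have hbad : volume ({t : ℝ | ¬ ‖φ t‖ ≤ C0} ∩ Ioi 0) = 0 := by
    have := (MeasureTheory.ae_iff).1 hae
    rwa [hμ, Measure.restrict_apply' measurableSet_Ioi] at this
  obtain ⟨N, hNsub, hNmeas, hN0⟩ := exists_measurable_superset_of_null hbad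
  -- quasi measure preserving scaling
  have hqmp : ∀ ε : ℝ, 0 < ε →
      Measure.QuasiMeasurePreserving (fun s : ℝ => ε^2*s) μ μ := by
    intro ε hε
    have hε2 : (0:ℝ) < ε^2 := by positivity
    have hpre : (fun s : ℝ => ε^2*s) ⁻¹' (Ioi 0) = Ioi 0 := by
      rw [preimage_const_mul_Ioi₀ _ hε2]
      simp
    have hmap : Measure.map (fun s : ℝ => ε^2*s) μ
        = (ENNReal.ofReal |(ε^2)⁻¹|) • μ := by
      rw [hμ]
      calc Measure.map (fun s : ℝ => ε^2*s) (volume.restrict (Ioi 0))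
          = Measure.map (fun s : ℝ => ε^2*s)
              (volume.restrict ((fun s : ℝ => ε^2*s) ⁻¹' (Ioi 0))) := by rw [hpre]
        _ = (Measure.map (fun s : ℝ => ε^2*s) volume).restrict (Ioi 0) :=
            (Measure.restrict_map (measurable_const_mul _) measurableSet_Ioi).symm
        _ = ((ENNReal.ofReal |(ε^2)⁻¹|) • volume).restrict (Ioi 0) := by
            rw [Real.map_volume_mul_left hε2.ne']
        _ = (ENNReal.ofReal |(ε^2)⁻¹|) • (volume.restrict (Ioi 0)) := by
            rw [Measure.restrict_smul]
    exact ⟨measurable_const_mul _, by rw [hmap]; exact Measure.smul_absolutelyContinuous⟩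
  have hint : Integrable A μ := exp_rpow_integrable hp
  have hbound_int : Integrable (fun s => C0 * A s) μ := hint.const_mul C0
  -- apply dominated convergence
  have hDCT := MeasureTheory.tendsto_integral_filter_of_dominated_convergence
    (μ := μ) (l := nhdsWithin (0:ℝ) (Ioi 0)) (F := F) (f := fun s => L * A s)
    (bound := fun s => C0 * A s)
    (by
      filter_upwards [eventually_mem_nhdsWithin] with ε (hε : ε ∈ Ioi (0:ℝ))
      have hε0 : (0:ℝ) < ε := hε
      have hφm : AEStronglyMeasurable (fun s => φ (ε^2*s)) μ :=
        hφ.1.comp_quasiMeasurePreserving (hqmp ε hε)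
      have hAm : AEStronglyMeasurable A μ :=
        expfac_cont.aestronglyMeasurable measurableSet_Ioi
      exact (hφm.mul hAm).indicator measurableSet_Ioc)
    (by
      filter_upwards [eventually_mem_nhdsWithin] with ε (hε : ε ∈ Ioi (0:ℝ))
      have hε0 : (0:ℝ) < ε := hε
      have hε2 : (0:ℝ) < ε^2 := by positivity
      have hae2 : ∀ᵐ s ∂μ, ‖φ (ε^2*s)‖ ≤ C0 := by
        rw [MeasureTheory.ae_iff, hμ, Measure.restrict_apply' measurableSet_Ioi]
        refine measure_mono_null ?_ (by
          have h1 : volume ((fun s : ℝ => ε^2*s) ⁻¹' N) = 0 := by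
            have h2 := Measure.map_apply (μ := (volume : Measure ℝ))
              (measurable_const_mul (ε^2)) hNmeas
            rw [Real.map_volume_mul_left hε2.ne'] at h2
            have : ((ENNReal.ofReal |(ε^2)⁻¹|) • (volume : Measure ℝ)) N = 0 := by
              simp [hN0]
            rw [this] at h2
            exact h2.symm
          exact h1)
        intro s hs
        obtain ⟨hsbad, hs0⟩ := hs
        have : ε^2*s ∈ {t : ℝ | ¬ ‖φ t‖ ≤ C0} ∩ Ioi 0 :=
          ⟨hsbad, mul_pos hε2 hs0⟩
        exact hNsub this
      filter_upwards [hae2, MeasureTheory.ae_restrict_mem measurableSet_Ioi]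
        with s hsφ (hs : s ∈ Ioi (0:ℝ))
      have hApos : 0 ≤ A s := expfac_nonneg hs
      by_cases hmem : s ∈ Ioc (0:ℝ) (ε^2)⁻¹
      · rw [hF]
        simp only [Set.indicator_of_mem hmem]
        rw [norm_mul]
        calc ‖φ (ε^2*s)‖ * ‖A s‖ ≤ C0 * ‖A s‖ :=
              mul_le_mul_of_nonneg_right hsφ (norm_nonneg _)
          _ = C0 * A s := by rw [Real.norm_eq_abs, abs_of_nonneg hApos]
      · rw [hF]
        simp only [Set.indicator_of_notMem hmem]
        simp only [norm_zero]
        positivity)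
    hbound_int
    (by
      filter_upwards [MeasureTheory.ae_restrict_mem measurableSet_Ioi]
        with s (hs : s ∈ Ioi (0:ℝ))
      have hs0 : (0:ℝ) < s := hs
      have htends : Filter.Tendsto (fun ε : ℝ => ε^2*s) (nhdsWithin 0 (Ioi 0))
          (nhdsWithin 0 (Ioi 0)) := by
        rw [tendsto_nhdsWithin_iff]
        constructor
        · have hc : Filter.Tendsto (fun ε : ℝ => ε^2*s) (nhds 0) (nhds 0) := by
            have := (((continuous_pow 2).mul (continuous_const (y := s))).tendsto (0:ℝ))
            simpa [Pi.mul_def] using this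
          exact hc.mono_left nhdsWithin_le_nhds
        · filter_upwards [eventually_mem_nhdsWithin] with ε (hε : ε ∈ Ioi (0:ℝ))
          have hε0 : (0:ℝ) < ε := hε
          exact mul_pos (by positivity) hs0
      have hφcomp : Filter.Tendsto (fun ε : ℝ => φ (ε^2*s)) (nhdsWithin 0 (Ioi 0))
          (nhds L) := hφL.comp htends
      have hindic : ∀ᶠ ε : ℝ in nhdsWithin 0 (Ioi 0), F ε s = φ (ε^2*s) * A s := by
        have hsq : Filter.Tendsto (fun ε : ℝ => ε^2) (nhdsWithin (0:ℝ) (Ioi 0)) (nhds 0) := by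
          have := (continuous_pow 2).tendsto (0:ℝ)
          simpa using this.mono_left nhdsWithin_le_nhds
        have hev : ∀ᶠ ε : ℝ in nhdsWithin 0 (Ioi 0), ε^2 < s⁻¹ :=
          hsq.eventually_lt_const (by positivity)
        filter_upwards [hev, eventually_mem_nhdsWithin] with ε hε2 (hε : ε ∈ Ioi (0:ℝ))
        have hε0 : (0:ℝ) < ε := hε
        have hε2pos : (0:ℝ) < ε^2 := by positivity
        have hsi : s * s⁻¹ = 1 := mul_inv_cancel₀ hs0.ne'
        have hei : ε^2 * (ε^2)⁻¹ = 1 := mul_inv_cancel₀ hε2pos.ne'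
        have hmem : s ∈ Ioc (0:ℝ) (ε^2)⁻¹ := by
          refine ⟨hs0, ?_⟩
          by_contra hcon
          push_neg at hcon
          have hipos : (0:ℝ) < (ε^2)⁻¹ := by positivity
          nlinarith
        rw [hF]
        simp only [Set.indicator_of_mem hmem]
      exact (hφcomp.mul_const (A s)).congr' (hindic.mono (fun ε h => h.symm)))
  -- conclude
  have hlim : (∫ s, (fun s => L * A s) s ∂μ) = L * ∫ s in Ioi (0:ℝ), A s := by
    rw [hμ, MeasureTheory.integral_const_mul]
  rw [hlim] at hDCT
  exact hDCT

lemma alpha_eq {m : ℕ} (hn : 0 < m+1) (φ : ℝ → ℝ) {ε : ℝ} (hε : 0 < ε) :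
    alphaFun (m+1) hn φ ε = -Mconst (m+1) *
      ∫ s in Ioi (0:ℝ), (Ioc (0:ℝ) (ε^2)⁻¹).indicator
        (fun s => φ (ε^2*s) * (Real.exp (-1/(4*s)) * s ^ (-((m+1:ℕ):ℝ)/2 - 1))) s := by
  set p : ℝ := -((m+1:ℕ):ℝ)/2 - 1 with hp
  set q : ℝ := ((m+1:ℕ):ℝ)/2 + 1 with hq
  set J : ℝ := ∫ z in {z : Fin m → ℝ | ∑ j, z j ^ 2 < 1}, Real.sqrt (1 - ∑ j, z j ^ 2)
    with hJ
  set X : ℝ := (2 * Real.sqrt π) ^ (m+1) with hX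
  have hX0 : X ≠ 0 := by
    rw [hX]
    have : (0:ℝ) < Real.sqrt π := Real.sqrt_pos.2 pi_pos
    positivity
  have hM : Mconst (m+1) = X⁻¹ * J := rfl
  -- step 1: pointwise rewrite of the inner integral
  have step1 : alphaFun (m+1) hn φ ε
      = ∫ t in Ioc (0:ℝ) 1, -(X⁻¹ * J) *
          (ε ^ (m+1) * (φ t * (Real.exp (-ε^2/(4*t)) * t ^ p))) := by
    rw [alphaFun]
    apply MeasureTheory.setIntegral_congr_fun measurableSet_Ioc
    intro t ht
    dsimp only
    have ht0 : (0:ℝ) < t := ht.1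
    rw [inner_integral hn ht0 hε]
    have hC : (2 * Real.sqrt (π * t)) ^ (m+1) = X * (Real.sqrt t) ^ (m+1) := by
      rw [hX, Real.sqrt_mul pi_pos.le, ← mul_pow]
      ring_nf
    have hst : (Real.sqrt t) ^ (m+1) * t = t ^ q := by
      rw [Real.sqrt_eq_rpow, ← Real.rpow_natCast (t ^ ((1:ℝ)/2)) (m+1),
        ← Real.rpow_mul ht0.le]
      nth_rewrite 2 [show t = t ^ (1:ℝ) from (Real.rpow_one t).symm]
      rw [← Real.rpow_add ht0]
      congr 1
      rw [hq]
      push_cast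
      ring
    have htp : t ^ p = (t ^ q)⁻¹ := by
      rw [hp, hq, show -((m+1:ℕ):ℝ)/2 - 1 = -(((m+1:ℕ):ℝ)/2 + 1) by ring,
        Real.rpow_neg ht0.le]
    have htq0 : t ^ q ≠ 0 := (Real.rpow_pos_of_pos ht0 q).ne'
    rw [hC, htp]
    have hkey : t * (X * (Real.sqrt t) ^ (m+1)) = X * t ^ q := by
      rw [← hst]; ring
    rw [show t * (X * Real.sqrt t ^ (m+1)) = X * t ^ q from hkey]
    set T : ℝ := t ^ q
    clear_value T
    field_simp
    ring
  rw [step1, MeasureTheory.integral_const_mul, ← hM]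
  congr 1
  rw [MeasureTheory.integral_const_mul]
  -- step 2: change of variables t = ε^2 s
  have hε2 : (0:ℝ) < ε^2 := by positivity
  set f : ℝ → ℝ := fun t => φ t * (Real.exp (-ε^2/(4*t)) * t ^ p) with hf
  have hI1 : (∫ t in Ioc (0:ℝ) 1, f t) = ∫ t in Ioi (0:ℝ), (Ioc (0:ℝ) 1).indicator f t := by
    rw [MeasureTheory.setIntegral_indicator measurableSet_Ioc,
      inter_eq_self_of_subset_right Ioc_subset_Ioi_self]
  have hcm := MeasureTheory.integral_comp_mul_left_Ioi
    ((Ioc (0:ℝ) 1).indicator f) 0 hε2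
  simp only [mul_zero, smul_eq_mul] at hcm
  -- hcm : ∫ s in Ioi 0, indicator f (ε^2 * s) = (ε^2)⁻¹ * ∫ t in Ioi 0, indicator f t
  have hI2 : (∫ t in Ioi (0:ℝ), (Ioc (0:ℝ) 1).indicator f t)
      = ε^2 * ∫ s in Ioi (0:ℝ), (Ioc (0:ℝ) 1).indicator f (ε^2 * s) := by
    rw [hcm, ← mul_assoc, mul_inv_cancel₀ hε2.ne', one_mul]
  have hI3 : (∫ s in Ioi (0:ℝ), (Ioc (0:ℝ) 1).indicator f (ε^2 * s))
      = (ε^2) ^ p * ∫ s in Ioi (0:ℝ), (Ioc (0:ℝ) (ε^2)⁻¹).indicator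
          (fun s => φ (ε^2*s) * (Real.exp (-1/(4*s)) * s ^ p)) s := by
    rw [← MeasureTheory.integral_const_mul]
    apply MeasureTheory.setIntegral_congr_fun measurableSet_Ioi
    intro s hs
    dsimp only
    have hs0 : (0:ℝ) < s := hs
    have hmemiff : ε^2 * s ∈ Ioc (0:ℝ) 1 ↔ s ∈ Ioc (0:ℝ) (ε^2)⁻¹ := by
      constructor
      · rintro ⟨h1, h2⟩
        refine ⟨hs0, ?_⟩
        rw [inv_eq_one_div, le_div_iff₀ hε2]
        linarith [mul_comm s (ε^2)]
      · rintro ⟨h1, h2⟩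
        refine ⟨mul_pos hε2 hs0, ?_⟩
        rw [inv_eq_one_div, le_div_iff₀ hε2] at h2
        linarith [mul_comm s (ε^2)]
    by_cases hmem : ε^2 * s ∈ Ioc (0:ℝ) 1
    · rw [Set.indicator_of_mem hmem, Set.indicator_of_mem (hmemiff.1 hmem)]
      have hexp : -ε^2/(4*(ε^2*s)) = -1/(4*s) := by
        rw [div_eq_div_iff (by positivity) (by positivity)]
        ring
      have hrp : (ε^2 * s) ^ p = (ε^2) ^ p * s ^ p :=
        Real.mul_rpow hε2.le hs0.le
      rw [hf]
      dsimp only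
      rw [hexp, hrp]
      ring
    · rw [Set.indicator_of_notMem hmem,
        Set.indicator_of_notMem (fun hc => hmem (hmemiff.2 hc))]
      ring
  have hcoef : (ε:ℝ) ^ (m+1) * (ε^2 * (ε^2) ^ p) = 1 := by
    have h2 : (ε^2 : ℝ) = ε ^ (2:ℝ) := by
      rw [← Real.rpow_natCast ε 2]; norm_num
    have hm' : (ε:ℝ) ^ (m+1) = ε ^ (((m+1:ℕ)):ℝ) := by
      rw [Real.rpow_natCast]
    have h3 : (ε ^ (2:ℝ)) ^ p = ε ^ (2 * p) := by
      rw [← Real.rpow_mul hε.le]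
    rw [hm', h2, h3, ← Real.rpow_add hε, ← Real.rpow_add hε]
    rw [show ((m+1:ℕ):ℝ) + (2 + 2*p) = 0 by rw [hp]; push_cast; ring]
    exact Real.rpow_zero ε
  set G : ℝ := ∫ s in Ioi (0:ℝ), (Ioc (0:ℝ) (ε^2)⁻¹).indicator
      (fun s => φ (ε^2*s) * (Real.exp (-1/(4*s)) * s ^ p)) s with hG
  rw [hI1, hI2, hI3,
    show ε ^ (m+1) * (ε^2 * ((ε^2) ^ p * G)) = (ε ^ (m+1) * (ε^2 * (ε^2) ^ p)) * G from by
      ring,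
    hcoef, one_mul]

/-- For `n ≥ 2` and `φ ∈ L^∞((0,∞))` with `φ(0^+) = L`, one has `M > 0` and
`α(ε) → -M · L · ∫_0^∞ e^{-1/(4s)} s^{-n/2-1} ds` as `ε → 0^+`. -/
theorem alphaFun_limit (n : ℕ) (hn : 2 ≤ n) (φ : ℝ → ℝ)
    (hφ : MemLp φ ⊤ (volume.restrict (Ioi (0 : ℝ))))
    (L : ℝ) (hφL : Filter.Tendsto φ (nhdsWithin 0 (Ioi 0)) (nhds L)) :
    0 < Mconst n ∧
      Filter.Tendsto (fun ε => alphaFun n (by omega) φ ε)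
        (nhdsWithin 0 (Ioi 0))
        (nhds (-Mconst n * L *
          ∫ s in Ioi (0 : ℝ), Real.exp (-1 / (4 * s)) * s ^ (-(n : ℝ) / 2 - 1))) := by
  obtain ⟨m, rfl⟩ : ∃ m, n = m + 1 := ⟨n - 1, by omega⟩
  refine ⟨Mconst_pos, ?_⟩
  have hplt : (-((m+1:ℕ):ℝ)/2 - 1) < -1 := by
    have h0 : (0:ℝ) < ((m+1:ℕ):ℝ) := by positivity
    linarith
  have hG := G_tendsto hplt φ hφ L hφL
  have hT := hG.const_mul (-Mconst (m+1))
  have hassoc : -Mconst (m+1) * (L * ∫ s in Ioi (0:ℝ),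
      Real.exp (-1/(4*s)) * s ^ (-((m+1:ℕ):ℝ)/2 - 1))
      = -Mconst (m+1) * L * ∫ s in Ioi (0:ℝ),
          Real.exp (-1/(4*s)) * s ^ (-((m+1:ℕ):ℝ)/2 - 1) := (mul_assoc _ _ _).symm
  rw [hassoc] at hT
  refine Filter.Tendsto.congr' ?_ hT
  filter_upwards [eventually_mem_nhdsWithin] with ε (hε : ε ∈ Ioi (0:ℝ))
  exact (alpha_eq (by omega) φ hε).symm
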